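/- Let k' be an algebraically closed field of characteristic p, q = p^r a power of p, and π ∈ k' a nonzero element. Let σ be the ring endomorphism of k'[[ε]] fixing ε and applying x ↦ x^q to each coefficient, acting entrywise on matrices. Then there exists g ∈ GL₃(k'[[ε]]) such that A·σ(g) = g·B, where A is the 3×3 matrix with rows (0,1,0), (0,π,1), (ε,0,0) and B is the 3×3 matrix with rows (1,0,0), (0,0,1), (0,ε,0). -/

import Mathlib

open scoped MatrixGroups

section
variable (q : ℕ) {k' : Type*} [Field k']

private lemma deg1 (hq2 : 2 ≤ q) (π u : k') (hπ : π ≠ 0) :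
    (Polynomial.C π * Polynomial.X ^ q + Polynomial.C u - Polynomial.X : Polynomial k').degree = q := by
  compute_degree!
  all_goals try simp only [Nat.cast_withBot, WithBot.unbotD_coe, WithBot.coe_ne_bot]
  · simp [show q ≠ 0 by omega, show ¬ (1 = q) by omega, hπ]
  · simp only [Nat.cast_withBot, ← WithBot.coe_one, ← WithBot.coe_sup, WithBot.coe_inj]
    exact sup_eq_left.mpr (by omega)

private lemma deg2 (hq2 : 2 ≤ q) (c d u : k') :
    (Polynomial.X ^ (q^6) + Polynomial.C c * Polynomial.X ^ (q^4) + Polynomial.C d * Polynomial.X ^ (q^2)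
      - Polynomial.C u : Polynomial k').degree = (q^6 : ℕ) := by
  have h1 : q^2 ≤ q^6 := Nat.pow_le_pow_right (by omega) (by omega)
  have h2 : q^4 ≤ q^6 := Nat.pow_le_pow_right (by omega) (by omega)
  have h3 : ¬ (q^6 = q^4) := Nat.ne_of_gt (Nat.pow_lt_pow_right (by omega) (by omega))
  have h4 : ¬ (q^6 = q^2) := Nat.ne_of_gt (Nat.pow_lt_pow_right (by omega) (by omega))
  compute_degree!
  · simp only [Nat.cast_withBot, WithBot.unbotD_coe, WithBot.coe_ne_bot]
    simp [h3, h4, show q ≠ 0 by omega]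
  · rw [sup_eq_left.mpr h2, sup_eq_left.mpr h1]
    simp [Nat.cast_withBot]

private lemma deg3 (hq2 : 2 ≤ q) (u : k') :
    (Polynomial.X ^ (q^2) - Polynomial.C u : Polynomial k').degree = (q^2 : ℕ) := by
  compute_degree!
  simp only [Nat.cast_withBot, WithBot.unbotD_coe, WithBot.coe_ne_bot]
  simp [show q ≠ 0 by omega]

private lemma deg4 (hq2 : 2 ≤ q) (u : k') :
    (Polynomial.X ^ (q-1) - Polynomial.C u : Polynomial k').degree = ((q-1 : ℕ) : WithBot ℕ) := by
  compute_degree!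
  all_goals try simp only [Nat.cast_withBot, WithBot.unbotD_coe, WithBot.coe_ne_bot]
  · simp [show ¬ (q - 1 = 0) by omega]

private lemma deg5 (hq2 : 2 ≤ q) (c d : k') (hd : d ≠ 0) :
    (Polynomial.X ^ (q^4) + Polynomial.C c * Polynomial.X ^ (q^2) + Polynomial.C d * Polynomial.X
      : Polynomial k').degree = (q^4 : ℕ) := by
  have h1 : (1:ℕ) ≤ q^4 := Nat.one_le_pow _ _ (by omega)
  have h2 : q^2 ≤ q^4 := Nat.pow_le_pow_right (by omega) (by omega)
  have h3 : ¬ (q^4 = q^2) := Nat.ne_of_gt (Nat.pow_lt_pow_right (by omega) (by omega))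
  have h4 : ¬ (q^4 = 1) := by
    have : q^1 < q^4 := Nat.pow_lt_pow_right (by omega) (by omega)
    simp at this; omega
  compute_degree!
  · simp only [Nat.cast_withBot, WithBot.unbotD_coe, WithBot.coe_ne_bot]
    simp [h3, h4, hd, show q ≠ 1 by omega]
  · simp only [Nat.cast_withBot, ← WithBot.coe_one, ← WithBot.coe_sup, WithBot.coe_inj]
    rw [sup_eq_left.mpr h2]
    exact sup_eq_left.mpr h1

private lemma deg6 (hq2 : 2 ≤ q) (a : k') :
    (Polynomial.X ^ (q^2) + Polynomial.C a * Polynomial.X : Polynomial k').natDegree = (q^2 : ℕ) := by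
  have h1 : 1 ≤ q^2 := Nat.one_le_pow _ _ (by omega)
  have h4 : ¬ (q^2 = 1) := by
    have : q^1 < q^2 := Nat.pow_lt_pow_right (by omega) (by omega)
    simp at this; omega
  compute_degree!
  all_goals first
    | simp [h4, show q ≠ 1 by omega]
    | exact sup_eq_left.mpr h1
end


/-- Equation (1) of the paper: over an algebraically closed field `k'` of characteristic `p`
with `π ≠ 0`, the two displayed matrices are `σ`-conjugate under `GL₃(k'[[ε]])`. -/
theorem statement3 (p r q : ℕ) (hp : p.Prime) (hr : 0 < r) (hq : q = p ^ r)
    (k' : Type*) [Field k'] [IsAlgClosed k'] [CharP k' p]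
    (π : k') (hπ : π ≠ 0)
    (σ : k' →+* k') (hσ : ∀ a : k', σ a = a ^ q) :
    ∃ g : GL (Fin 3) (PowerSeries k'),
      (!![0, 1, 0; 0, PowerSeries.C π, 1; PowerSeries.X, 0, 0] :
          Matrix (Fin 3) (Fin 3) (PowerSeries k')) *
        (RingHom.mapMatrix (PowerSeries.map σ)) (g : Matrix (Fin 3) (Fin 3) (PowerSeries k'))
      = (g : Matrix (Fin 3) (Fin 3) (PowerSeries k')) *
        (!![1, 0, 0; 0, 0, 1; 0, PowerSeries.X, 0] :
          Matrix (Fin 3) (Fin 3) (PowerSeries k')) := by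
  classical
  haveI : Fact p.Prime := ⟨hp⟩
  have hq2 : 2 ≤ q := by
    subst hq
    calc 2 ≤ p := hp.two_le
    _ ≤ p ^ r := Nat.le_self_pow (by omega) p
  -- Frobenius is additive
  have hfq : ∀ a b : k', (a + b) ^ q = a ^ q + b ^ q := by
    intro a b; subst hq; exact add_pow_char_pow ..
  have hfq2 : ∀ a b : k', (a + b) ^ (q ^ 2) = a ^ (q ^ 2) + b ^ (q ^ 2) := by
    intro a b
    have h : q ^ 2 = p ^ (r * 2) := by subst hq; rw [pow_mul]
    rw [h]; exact add_pow_char_pow ..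
  have hcast2 : ((q ^ 2 : ℕ) : k') = 0 := by
    subst hq; rw [← pow_mul, Nat.cast_pow, CharP.cast_eq_zero k' p, zero_pow (by positivity)]
  have hcast4 : ((q ^ 4 : ℕ) : k') = 0 := by
    subst hq; rw [← pow_mul, Nat.cast_pow, CharP.cast_eq_zero k' p, zero_pow (by positivity)]
  -- the two constants
  set c : k' := π ^ q + π ^ (q ^ 4) with hc
  set d : k' := π ^ (q + q ^ 2) with hd
  have hd0 : d ≠ 0 := pow_ne_zero _ hπ
  -- step existence for the `b` sequence
  have hbstep : ∀ u : k', ∃ t : k', t = π * t ^ q + u := by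
    intro u
    obtain ⟨t, ht⟩ := IsAlgClosed.exists_root
      (p := Polynomial.C π * Polynomial.X ^ q + Polynomial.C u - Polynomial.X)
      (by rw [deg1 q hq2 π u hπ]; simp; omega)
    refine ⟨t, ?_⟩
    have h2 := ht
    simp only [Polynomial.IsRoot, Polynomial.eval_sub, Polynomial.eval_add,
      Polynomial.eval_mul, Polynomial.eval_pow, Polynomial.eval_C, Polynomial.eval_X] at h2
    linear_combination -h2
  -- step existence for the `x` sequence
  have hxstep : ∀ u : k', ∃ t : k',
      t ^ (q^6) + c * t ^ (q^4) + d * t ^ (q^2) = u := by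
    intro u
    obtain ⟨t, ht⟩ := IsAlgClosed.exists_root
      (p := Polynomial.X ^ (q^6) + Polynomial.C c * Polynomial.X ^ (q^4)
        + Polynomial.C d * Polynomial.X ^ (q^2) - Polynomial.C u)
      (by rw [deg2 q hq2 c d u]; simp; omega)
    refine ⟨t, ?_⟩
    have h2 := ht
    simp only [Polynomial.IsRoot, Polynomial.eval_sub, Polynomial.eval_add,
      Polynomial.eval_mul, Polynomial.eval_pow, Polynomial.eval_C, Polynomial.eval_X] at h2
    linear_combination h2
  -- initial value for `b`
  obtain ⟨b0, hb00, hb0⟩ : ∃ s : k', s ≠ 0 ∧ π * s ^ q = s := by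
    obtain ⟨s, hs⟩ := IsAlgClosed.exists_root
      (p := Polynomial.X ^ (q-1) - Polynomial.C π⁻¹)
      (by rw [deg4 q hq2 π⁻¹]; simp; omega)
    have h2 := hs
    simp only [Polynomial.IsRoot, Polynomial.eval_sub, Polynomial.eval_pow,
      Polynomial.eval_C, Polynomial.eval_X, sub_eq_zero] at h2
    have hs0 : s ≠ 0 := by
      intro h0
      rw [h0, zero_pow (by omega : q - 1 ≠ 0)] at h2
      exact hπ (by simpa using h2.symm)
    refine ⟨s, hs0, ?_⟩
    have : s ^ q = s ^ (q - 1) * s := by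
      rw [← pow_succ]; congr 1; omega
    rw [this, h2]
    field_simp
  -- initial value for `x`: a root of P with good nonvanishing
  obtain ⟨x0, hx0root, hx0good⟩ : ∃ t : k',
      t ^ (q^6) + c * t ^ (q^4) + d * t ^ (q^2) = 0 ∧ t ^ (q^2) + π * t ≠ 0 := by
    -- first find a good root `u` of `P(u) = u^{q^4} + c u^{q^2} + d u`
    set Pp : Polynomial k' := Polynomial.X ^ (q^4) + Polynomial.C c * Polynomial.X ^ (q^2)
      + Polynomial.C d * Polynomial.X with hPp
    set Bp : Polynomial k' := Polynomial.X ^ (q^2) + Polynomial.C (π^(q^2)) * Polynomial.X with hBp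
    have hPpdeg : Pp.degree = (q^4 : ℕ) := deg5 q hq2 c d hd0
    have hPpnatdeg : Pp.natDegree = q^4 := Polynomial.natDegree_eq_of_degree_eq_some hPpdeg
    have hq4pos : 1 ≤ q^4 := Nat.one_le_pow _ _ (by omega)
    have hq2pos : 1 ≤ q^2 := Nat.one_le_pow _ _ (by omega)
    have hPp0 : Pp ≠ 0 := fun h => by
      rw [h, Polynomial.natDegree_zero] at hPpnatdeg; omega
    have hBpnatdeg : Bp.natDegree = q^2 := deg6 q hq2 (π^(q^2))
    have hder : Pp.derivative = Polynomial.C d := by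
      simp [hPp, Polynomial.derivative_X_pow, hcast2, hcast4]
    have hsep : Pp.Separable := by
      rw [Polynomial.separable_def, hder]
      exact ⟨0, Polynomial.C d⁻¹, by
        rw [zero_mul, zero_add, ← Polynomial.C_mul, inv_mul_cancel₀ hd0, Polynomial.C_1]⟩
    have hnodup : Pp.roots.Nodup := Polynomial.nodup_roots hsep
    have hsplits : Pp.Splits := IsAlgClosed.splits Pp
    have hcard : Pp.roots.card = q^4 := by
      rw [Polynomial.splits_iff_card_roots.mp hsplits, hPpnatdeg]
    obtain ⟨u, huP, huB⟩ : ∃ u : k', Polynomial.eval u Pp = 0 ∧ u^(q^2) + π^(q^2) * u ≠ 0 := by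
      by_contra hcon
      push_neg at hcon
      have hsub : Pp.roots.toFinset ⊆ Bp.roots.toFinset := by
        intro v hv
        rw [Multiset.mem_toFinset, Polynomial.mem_roots'] at hv ⊢
        have hBv := hcon v hv.2
        refine ⟨fun h => by rw [h, Polynomial.natDegree_zero] at hBpnatdeg; omega, ?_⟩
        show Polynomial.eval v Bp = 0
        simp only [hBp, Polynomial.eval_add, Polynomial.eval_mul, Polynomial.eval_pow,
          Polynomial.eval_C, Polynomial.eval_X]
        linear_combination hBv
      have h1 : Pp.roots.toFinset.card = q^4 := by
        rw [Multiset.toFinset_card_of_nodup hnodup, hcard]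
      have h2 : Bp.roots.toFinset.card ≤ q^2 := by
        calc Bp.roots.toFinset.card ≤ Multiset.card Bp.roots := Multiset.toFinset_card_le _
        _ ≤ Bp.natDegree := Polynomial.card_roots' Bp
        _ = q^2 := hBpnatdeg
      have h3 := Finset.card_le_card hsub
      have h4 : q^2 < q^4 := Nat.pow_lt_pow_right (by omega) (by omega)
      omega
    -- now take a q^2-th root of u
    obtain ⟨t, ht⟩ := IsAlgClosed.exists_root
      (p := Polynomial.X ^ (q^2) - Polynomial.C u)
      (by rw [deg3 q hq2 u]; simp; omega)
    have htu : t ^ (q^2) = u := by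
      have h2 := ht
      simp only [Polynomial.IsRoot, Polynomial.eval_sub, Polynomial.eval_pow,
        Polynomial.eval_C, Polynomial.eval_X, sub_eq_zero] at h2
      exact h2
    refine ⟨t, ?_, ?_⟩
    · have hPu : u^(q^4) + c * u^(q^2) + d * u = 0 := by
        have := huP
        simp only [hPp, Polynomial.eval_add, Polynomial.eval_mul, Polynomial.eval_pow,
          Polynomial.eval_C, Polynomial.eval_X] at this
        linear_combination this
      have e1 : t ^ (q^6) = u ^ (q^4) := by
        rw [← htu, ← pow_mul]; congr 1; ring
      have e2 : t ^ (q^4) = u ^ (q^2) := by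
        rw [← htu, ← pow_mul]; congr 1; ring
      rw [e1, e2, htu]; exact hPu
    · intro h0
      apply huB
      have e4 : (t^(q^2))^(q^2) = u^(q^2) := by rw [htu]
      have e3 : u^(q^2) + π^(q^2) * u = (t^(q^2) + π * t)^(q^2) := by
        rw [hfq2, mul_pow, e4, htu]
      rw [e3, h0, zero_pow (by positivity)]
  -- the recursively defined coefficient sequences
  obtain ⟨b, hbz, hbs⟩ : ∃ b : ℕ → k', b 0 = b0 ∧
      ∀ n, b (n+1) = π * (b (n+1))^q + (b n)^(q^3) := by
    refine ⟨fun n => Nat.rec b0 (fun _ t => Classical.choose (hbstep (t^(q^3)))) n, rfl,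
      fun n => ?_⟩
    exact Classical.choose_spec
      (hbstep ((Nat.rec b0 (fun _ t => Classical.choose (hbstep (t^(q^3)))) n)^(q^3)))
  obtain ⟨x, hxz, hxs⟩ : ∃ x : ℕ → k', x 0 = x0 ∧
      ∀ n, (x (n+1))^(q^6) + c*(x (n+1))^(q^4) + d*(x (n+1))^(q^2) = x n := by
    refine ⟨fun n => Nat.rec x0 (fun _ t => Classical.choose (hxstep t)) n, rfl, fun n => ?_⟩
    exact Classical.choose_spec (hxstep (Nat.rec x0 (fun _ t => Classical.choose (hxstep t)) n))
  -- derived sequences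
  obtain ⟨Y, hYdef⟩ : ∃ Y : ℕ → k', ∀ n, Y n = (x n)^(q^2) + π * x n := ⟨_, fun _ => rfl⟩
  obtain ⟨Z, hZdef⟩ : ∃ Z : ℕ → k', ∀ n, Z n = (Y n)^(q^2) := ⟨_, fun _ => rfl⟩
  obtain ⟨cc, hcc0, hccS⟩ : ∃ cc : ℕ → k', cc 0 = 0 ∧ ∀ n, cc (n+1) = (b n)^(q^2) :=
    ⟨fun n => Nat.casesOn n 0 (fun m => (b m)^(q^2)), rfl, fun _ => rfl⟩
  obtain ⟨w, hw0, hwS⟩ : ∃ w : ℕ → k', w 0 = 0 ∧ ∀ n, w (n+1) = (x n)^q :=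
    ⟨fun n => Nat.casesOn n 0 (fun m => (x m)^q), rfl, fun _ => rfl⟩
  -- the key computation
  have hE : ∀ n, σ (π * (Y n)^q + (Z n)^q)
      = (x n)^(q^6) + c * (x n)^(q^4) + d * (x n)^(q^2) := by
    intro n
    have hYq2 : (Y n)^(q^2) = (x n)^(q^4) + π^(q^2) * (x n)^(q^2) := by
      rw [hYdef, hfq2, mul_pow]
      congr 1
      rw [← pow_mul]; congr 1; ring
    have hYq4 : (Y n)^(q^4) = (x n)^(q^6) + π^(q^4) * (x n)^(q^4) := by
      have h0 : (Y n)^(q^4) = ((Y n)^(q^2))^(q^2) := by rw [← pow_mul]; congr 1; ring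
      have e1 : ((x n)^(q^4))^(q^2) = (x n)^(q^6) := by rw [← pow_mul]; congr 1; ring
      have e2 : ((x n)^(q^2))^(q^2) = (x n)^(q^4) := by rw [← pow_mul]; congr 1; ring
      have e3 : ((π^(q^2) * (x n)^(q^2)))^(q^2) = π^(q^4) * (x n)^(q^4) := by
        rw [mul_pow, e2, ← pow_mul]; congr 2; ring
      rw [h0, hYq2, hfq2, e1, e3]
    have e4 : ((Y n)^q)^q = (Y n)^(q^2) := by rw [← pow_mul]; congr 1; ring
    have e5 : ((Z n)^q)^q = (Z n)^(q^2) := by rw [← pow_mul]; congr 1; ring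
    have e6 : (Z n)^(q^2) = (Y n)^(q^4) := by rw [hZdef, ← pow_mul]; congr 1; ring
    have e7 : π^q * π^(q^2) = π^(q + q^2) := by rw [← pow_add]
    rw [hσ, hfq, mul_pow, e4, e5, e6, hYq2, hYq4, hc, hd]
    ring
  have hE0 : σ (π * (Y 0)^q + (Z 0)^q) = 0 := by
    rw [hE 0, hxz]; exact hx0root
  have hES : ∀ n, σ (π * (Y (n+1))^q + (Z (n+1))^q) = x n := by
    intro n; rw [hE (n+1)]; exact hxs n
  -- the matrix
  set M : Matrix (Fin 3) (Fin 3) (PowerSeries k') :=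
    !![PowerSeries.mk (fun n => (b n)^q), PowerSeries.mk (fun n => (Y n)^q), PowerSeries.mk x;
       PowerSeries.mk b, PowerSeries.mk (fun n => π * (Y n)^q + (Z n)^q), PowerSeries.mk Y;
       PowerSeries.mk cc, PowerSeries.mk w, PowerSeries.mk Z] with hMdef
  -- invertibility
  have hb00' : b 0 ≠ 0 := by rw [hbz]; exact hb00
  have hb0' : π * (b 0)^q = b 0 := by rw [hbz]; exact hb0
  have hZ0 : Z 0 ≠ 0 := by
    rw [hZdef, hYdef, hxz]; exact pow_ne_zero _ hx0good
  have hdetM : IsUnit M.det := by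
    rw [PowerSeries.isUnit_iff_constantCoeff, RingHom.map_det]
    have hM0 : (PowerSeries.constantCoeff (R := k')).mapMatrix M
        = !![(b 0)^q, (Y 0)^q, x 0; b 0, π * (Y 0)^q + (Z 0)^q, Y 0; 0, 0, Z 0] := by
      ext i j
      fin_cases i <;> fin_cases j <;>
        simp [hMdef, RingHom.mapMatrix_apply, Matrix.map_apply, hcc0, hw0]
    rw [hM0, Matrix.det_fin_three]
    rw [isUnit_iff_ne_zero]
    intro hcon
    simp at hcon
    have hzz : (b 0)^q * ((Z 0)^q * Z 0) = 0 := by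
      first
      | linear_combination hcon - ((Y 0)^q * Z 0) * hb0'
      | linear_combination hcon + ((Y 0)^q * Z 0) * hb0'
      | linear_combination -hcon - ((Y 0)^q * Z 0) * hb0'
      | linear_combination -hcon + ((Y 0)^q * Z 0) * hb0'
    exact (mul_ne_zero (pow_ne_zero _ hb00')
      (mul_ne_zero (pow_ne_zero _ hZ0) hZ0)) hzz
  have hMunit : IsUnit M := (Matrix.isUnit_iff_isUnit_det M).mpr hdetM
  refine ⟨hMunit.unit, ?_⟩
  rw [IsUnit.unit_spec]
  have hcoeS : ∀ f : ℕ → k', PowerSeries.map σ (PowerSeries.mk f)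
      = PowerSeries.mk (fun n => σ (f n)) := by
    intro f; ext n; simp [PowerSeries.coeff_map]
  ext i j
  fin_cases i <;> fin_cases j <;>
    simp [Matrix.mul_apply, Fin.sum_univ_three, hMdef, RingHom.mapMatrix_apply,
      Matrix.map_apply, hcoeS, Matrix.vecHead, Matrix.vecTail, Function.comp]
  -- expanded forms of the key identity
  case _ => -- (0,0)
    rename_i n; rw [hσ]
  case _ => -- (0,1)
    rename_i n
    have hE0' : σ π * σ (Y 0)^q + σ (Z 0)^q = 0 := by simpa using hE0
    have hES' : ∀ m, σ π * σ (Y (m+1))^q + σ (Z (m+1))^q = x m := fun m => by simpa using hES m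
    cases n with
    | zero => rw [PowerSeries.coeff_zero_mul_X]; exact hE0'
    | succ m => rw [PowerSeries.coeff_succ_mul_X, PowerSeries.coeff_mk]; exact hES' m
  case _ => -- (0,2)
    rename_i n; rw [hσ]
  case _ => -- (1,0)
    rename_i n
    cases n with
    | zero => rw [hcc0, map_zero, add_zero, hσ]; exact hb0'
    | succ m =>
      rw [hccS, hσ, hσ]
      have e : ((b m)^(q^2))^q = (b m)^(q^3) := by
        rw [show (q^3 : ℕ) = q^2*q by ring, pow_mul]
      rw [e]; exact (hbs m).symm
  case _ => -- (1,1)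
    rename_i n
    have hE0' : σ π * σ (Y 0)^q + σ (Z 0)^q = 0 := by simpa using hE0
    have hES' : ∀ m, σ π * σ (Y (m+1))^q + σ (Z (m+1))^q = x m := fun m => by simpa using hES m
    cases n with
    | zero =>
      rw [PowerSeries.coeff_zero_mul_X, hE0', hw0, map_zero, mul_zero, add_zero]
    | succ m =>
      rw [PowerSeries.coeff_succ_mul_X, PowerSeries.coeff_mk, hES' m, hwS, hσ]
      have e : ((x m)^q)^q = (x m)^(q^2) := by
        rw [show (q^2 : ℕ) = q*q by ring, pow_mul]
      rw [e, hYdef]; ring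
  case _ => -- (1,2)
    rename_i n; rw [hσ, hσ]
  case _ => -- (2,0)
    rename_i n
    cases n with
    | zero => rw [PowerSeries.coeff_zero_X_mul, hcc0]
    | succ m =>
      rw [PowerSeries.coeff_succ_X_mul, PowerSeries.coeff_mk, hσ, hccS]
      rw [show (q^2 : ℕ) = q*q by ring, pow_mul]
  case _ => -- (2,1)
    rename_i n
    cases n with
    | zero => rw [PowerSeries.coeff_zero_X_mul, PowerSeries.coeff_zero_mul_X]
    | succ m =>
      rw [PowerSeries.coeff_succ_X_mul, PowerSeries.coeff_succ_mul_X,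
        PowerSeries.coeff_mk, PowerSeries.coeff_mk, hσ, hZdef]
      rw [show (q^2 : ℕ) = q*q by ring, pow_mul]
  case _ => -- (2,2)
    rename_i n
    cases n with
    | zero => rw [PowerSeries.coeff_zero_X_mul, hw0]
    | succ m => rw [PowerSeries.coeff_succ_X_mul, PowerSeries.coeff_mk, hσ, hwS]
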